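/- The extension closure ⟨C_00, C_20⟩ of the 0-dimensional sheaves together with the 1-dimensional sheaves with horizontal support is a torsion class in Coh(X). -/

import Mathlib

/-!
A framework for torsion theory computations on elliptic threefolds
(following Angeles–Lo–van der Linden).

We axiomatize the setting of a Weierstraß elliptic threefold `π : X → B`:
`𝒜` plays the role of the abelian category `Coh(X)`, `D` plays the role of
the bounded derived category `D^b(Coh(X))` (a category with a shift by `ℤ`),
`ι : 𝒜 ⥤ D` is the canonical embedding, `Φ, Φhat` are the relative
Fourier–Mukai autoequivalences, `dim E` is the dimension of `supp E`,
`fdim E` is the dimension of `π(supp E)`, `hat` is the Fourier–Mukai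
transform of a WIT sheaf, `C20` is the class of pure 1-dimensional sheaves
with horizontal support, and `ch` is the Chern character (as a 2 × 3 integer
matrix, for the product threefold `X = C × B`).

The paper's `Properties' (D0–D3, Z1–Z2, A1–A4, TC1–TC3, C0–C1, CH0p–CH3p,
A4p) are encoded in the axiom structures `EllipticAxioms` (general
Weierstraß threefolds) and `ProductAxioms` (the product of an elliptic
curve and a K3 surface of Picard rank one).
-/

open CategoryTheory CategoryTheory.Limits

universe v v' u u'

namespace EllipticFramework

variable {𝒜 : Type u} [Category.{v} 𝒜] [Abelian 𝒜]

/-- `(f, g)` form a short exact sequence `0 → A → B → C → 0`. -/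
def IsShortExact {A B C : 𝒜} (f : A ⟶ B) (g : B ⟶ C) : Prop :=
  ∃ w : f ≫ g = 0, (ShortComplex.mk f g w).ShortExact

/-- `E'` is a quotient of `E` (in the abelian category). -/
def IsQuotient (E E' : 𝒜) : Prop := ∃ f : E ⟶ E', Epi f

/-- The extension closure `⟨T⟩` of a class of objects `T`: the smallest class of
objects containing `T` and the zero objects and closed under extensions
(hence the object class of the smallest extension-closed full subcategory
containing `T`). -/
inductive ExtClosure (T : Set 𝒜) : 𝒜 → Prop
  | of {E : 𝒜} (hE : E ∈ T) : ExtClosure T E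
  | zero {E : 𝒜} (hE : IsZero E) : ExtClosure T E
  | ext {A B C : 𝒜} (f : A ⟶ B) (g : B ⟶ C) (hfg : IsShortExact f g)
      (hA : ExtClosure T A) (hC : ExtClosure T C) : ExtClosure T B

/-- `Hom(T, F) = 0`. -/
def HomOrth (T F : Set 𝒜) : Prop :=
  ∀ ⦃A : 𝒜⦄, A ∈ T → ∀ ⦃B : 𝒜⦄, B ∈ F → ∀ f : A ⟶ B, f = 0

/-- `(T, F)` is a torsion pair: `Hom(T, F) = 0` and every object `E` fits in a
short exact sequence `0 → A → E → C → 0` with `A ∈ T` and `C ∈ F`. -/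
def IsTorsionPair (T F : Set 𝒜) : Prop :=
  HomOrth T F ∧
    ∀ E : 𝒜, ∃ (A C : 𝒜) (f : A ⟶ E) (g : E ⟶ C),
      A ∈ T ∧ C ∈ F ∧ IsShortExact f g

/-- `T` is a torsion class, i.e. the first member of some torsion pair. -/
def IsTorsionClass (T : Set 𝒜) : Prop := ∃ F : Set 𝒜, IsTorsionPair T F

/-- `(T, F)` is a torsion pair in the full (Serre, hence abelian) subcategory
whose objects are the class `𝒮`. -/
def IsTorsionPairIn (𝒮 T F : Set 𝒜) : Prop :=
  T ⊆ 𝒮 ∧ F ⊆ 𝒮 ∧ HomOrth T F ∧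
    ∀ E ∈ 𝒮, ∃ (A C : 𝒜) (f : A ⟶ E) (g : E ⟶ C),
      A ∈ T ∧ C ∈ F ∧ IsShortExact f g

/-- `T` is a torsion class in the full subcategory with object class `𝒮`. -/
def IsTorsionClassIn (𝒮 T : Set 𝒜) : Prop := ∃ F : Set 𝒜, IsTorsionPairIn 𝒮 T F

/-- `T` is (the object class of) a Serre subcategory: for every short exact
sequence `0 → A → B → C → 0`, `B ∈ T` iff both `A ∈ T` and `C ∈ T`. -/
def IsSerre (T : Set 𝒜) : Prop :=
  ∀ {A B C : 𝒜} (f : A ⟶ B) (g : B ⟶ C), IsShortExact f g →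
    (B ∈ T ↔ A ∈ T ∧ C ∈ T)

/-- The data of the elliptic-threefold framework. -/
structure EllipticData (𝒜 : Type u) (D : Type u') [Category.{v} 𝒜] [Abelian 𝒜]
    [Category.{v'} D] [HasShift D ℤ] where
  /-- the embedding `Coh(X) → D^b(Coh(X))` -/
  ι : 𝒜 ⥤ D
  /-- the relative Fourier–Mukai transform `Φ` -/
  Φ : D ⥤ D
  /-- the relative Fourier–Mukai transform `Φ̂` -/
  Φhat : D ⥤ D
  /-- `dim E = dim supp(E)` -/
  dim : 𝒜 → ℕ
  /-- `fdim E = dim π(supp(E))` -/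
  fdim : 𝒜 → ℕ
  /-- the transform `Ê` of a WIT sheaf `E` -/
  hat : 𝒜 → 𝒜
  /-- `C20 = 𝒜_h^{≤1}`: pure 1-dimensional sheaves all of whose 1-dimensional
  irreducible components of support meet every fiber of `π` in finitely many
  points -/
  C20 : Set 𝒜
  /-- the Chern character as a `2 × 3` integer matrix (product threefold case) -/
  ch : D → Fin 2 → Fin 3 → ℤ

namespace EllipticData

variable {D : Type u'} [Category.{v'} D] [HasShift D ℤ]
variable (S : EllipticData 𝒜 D)

/-- `E` is `Φ`-WIT_i : `Φ(E) ≅ F[-i]` for some sheaf `F`.  `W_{i,Φ}`. -/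
def WIT (i : ℤ) : Set 𝒜 :=
  {E | ∃ F : 𝒜, Nonempty (S.Φ.obj (S.ι.obj E) ≅ (S.ι.obj F)⟦(-i)⟧)}

/-- `E` is `Φ̂`-WIT_i.  `W_{i,Φ̂}`. -/
def WIThat (i : ℤ) : Set 𝒜 :=
  {E | ∃ F : 𝒜, Nonempty (S.Φhat.obj (S.ι.obj E) ≅ (S.ι.obj F)⟦(-i)⟧)}

/-- `𝒜_X^{≤ d}`, sheaves of dimension at most `d`. -/
def Adim (d : ℕ) : Set 𝒜 := {E | S.dim E ≤ d}

/-- `𝒜(π)_{≤ e}`, sheaves with `dim π(supp E) ≤ e`;  `Afib 0 = 𝒜(π)_0`. -/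
def Afib (e : ℕ) : Set 𝒜 := {E | S.fdim E ≤ e}

/-- `𝒜^d(π)_e = {E : dim E = d, dim π(supp E) = e}`. -/
def Ade (d e : ℕ) : Set 𝒜 := {E | S.dim E = d ∧ S.fdim E = e}

/-- `C_00 = 𝒜_X^{≤0}`. -/
def C00 : Set 𝒜 := S.Adim 0

/-- `C_10 = {E ∈ 𝒜(π)_0 ∩ W_{0,Φ} : Hom(C_00, E) = 0}`. -/
def C10 : Set 𝒜 :=
  {E | E ∈ S.Afib 0 ∧ E ∈ S.WIT 0 ∧ ∀ A ∈ S.C00, ∀ f : A ⟶ E, f = 0}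

/-- `C_11 = {E ∈ 𝒜(π)_0 ∩ W_{1,Φ} : dim Ê = 0}`. -/
def C11 : Set 𝒜 :=
  {E | E ∈ S.Afib 0 ∧ E ∈ S.WIT 1 ∧ S.dim (S.hat E) = 0}

/-- `C_12 = {E ∈ 𝒜(π)_0 ∩ W_{1,Φ} : dim Ê = 1, Hom(C_11, E) = 0}`. -/
def C12 : Set 𝒜 :=
  {E | E ∈ S.Afib 0 ∧ E ∈ S.WIT 1 ∧ S.dim (S.hat E) = 1 ∧
    ∀ A ∈ S.C11, ∀ f : A ⟶ E, f = 0}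

/-- `C_30 = 𝒜^2(π)_1 ∩ W_{0,Φ}`. -/
def C30 : Set 𝒜 := {E | E ∈ S.Ade 2 1 ∧ E ∈ S.WIT 0}

/-- `C_31 = {E ∈ Φ(C_20) : dim E = 2}` (every sheaf in `C_20` is `Φ`-WIT_0). -/
def C31 : Set 𝒜 := {E | S.dim E = 2 ∧ ∃ F ∈ S.C20, Nonempty (S.hat F ≅ E)}

/-- `C_32 = {E ∈ 𝒜^2(π)_1 ∩ W_{1,Φ} : dim Ê = 2}`. -/
def C32 : Set 𝒜 := {E | E ∈ S.Ade 2 1 ∧ E ∈ S.WIT 1 ∧ S.dim (S.hat E) = 2}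

/-- `C_40 = {E ∈ 𝒜^2(π)_2 ∩ W_{0,Φ} : dim Ê = 3}`. -/
def C40 : Set 𝒜 := {E | E ∈ S.Ade 2 2 ∧ E ∈ S.WIT 0 ∧ S.dim (S.hat E) = 3}

/-- `C_50 = 𝒜^3(π)_2 ∩ W_{0,Φ}`. -/
def C50 : Set 𝒜 := {E | E ∈ S.Ade 3 2 ∧ E ∈ S.WIT 0}

/-- `C_51 = {E ∈ 𝒜^3(π)_2 ∩ W_{1,Φ} : dim Ê = 2}`. -/
def C51 : Set 𝒜 := {E | E ∈ S.Ade 3 2 ∧ E ∈ S.WIT 1 ∧ S.dim (S.hat E) = 2}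

/-- `C_52 = {E ∈ 𝒜^3(π)_2 ∩ W_{1,Φ} : dim Ê = 3}`. -/
def C52 : Set 𝒜 := {E | E ∈ S.Ade 3 2 ∧ E ∈ S.WIT 1 ∧ S.dim (S.hat E) = 3}

/-- `𝒯_00 = ⟨C_00⟩`. -/
def T00 : Set 𝒜 := ExtClosure S.C00
/-- `𝒯_10 = ⟨C_00, C_10⟩`. -/
def T10 : Set 𝒜 := ExtClosure (S.C00 ∪ S.C10)
/-- `𝒯_11 = ⟨𝒯_10, C_11⟩`. -/
def T11 : Set 𝒜 := ExtClosure (S.C00 ∪ S.C10 ∪ S.C11)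
/-- `𝒯_12 = ⟨𝒯_11, C_12⟩`. -/
def T12 : Set 𝒜 := ExtClosure (S.C00 ∪ S.C10 ∪ S.C11 ∪ S.C12)
/-- `𝒯_20 = ⟨C_ij : i ≤ 2⟩`. -/
def T20 : Set 𝒜 := ExtClosure (S.C00 ∪ S.C10 ∪ S.C11 ∪ S.C12 ∪ S.C20)
/-- `𝒯_30 = ⟨𝒯_20, C_30⟩`. -/
def T30 : Set 𝒜 := ExtClosure (S.C00 ∪ S.C10 ∪ S.C11 ∪ S.C12 ∪ S.C20 ∪ S.C30)
/-- `𝒯_31 = ⟨𝒯_30, C_31⟩`. -/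
def T31 : Set 𝒜 :=
  ExtClosure (S.C00 ∪ S.C10 ∪ S.C11 ∪ S.C12 ∪ S.C20 ∪ S.C30 ∪ S.C31)
/-- `𝒯_32 = ⟨𝒯_31, C_32⟩`. -/
def T32 : Set 𝒜 :=
  ExtClosure (S.C00 ∪ S.C10 ∪ S.C11 ∪ S.C12 ∪ S.C20 ∪ S.C30 ∪ S.C31 ∪ S.C32)
/-- `𝒯_40 = ⟨C_ij : i ≤ 4⟩`. -/
def T40 : Set 𝒜 :=
  ExtClosure (S.C00 ∪ S.C10 ∪ S.C11 ∪ S.C12 ∪ S.C20 ∪ S.C30 ∪ S.C31 ∪ S.C32 ∪ S.C40)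
/-- `𝒯_50 = ⟨𝒯_40, C_50⟩`. -/
def T50 : Set 𝒜 :=
  ExtClosure (S.C00 ∪ S.C10 ∪ S.C11 ∪ S.C12 ∪ S.C20 ∪ S.C30 ∪ S.C31 ∪ S.C32 ∪ S.C40 ∪ S.C50)
/-- `𝒯_51 = ⟨𝒯_50, C_51⟩`. -/
def T51 : Set 𝒜 :=
  ExtClosure (S.C00 ∪ S.C10 ∪ S.C11 ∪ S.C12 ∪ S.C20 ∪ S.C30 ∪ S.C31 ∪ S.C32 ∪ S.C40 ∪ S.C50 ∪ S.C51)
/-- `𝒯_52 = ⟨𝒯_51, C_52⟩`. -/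
def T52 : Set 𝒜 :=
  ExtClosure (S.C00 ∪ S.C10 ∪ S.C11 ∪ S.C12 ∪ S.C20 ∪ S.C30 ∪ S.C31 ∪ S.C32 ∪ S.C40 ∪ S.C50 ∪ S.C51 ∪ S.C52)
/-- `ℱ_2 = ⟨C_00, C_10, C_20⟩`. -/
def F2 : Set 𝒜 := ExtClosure (S.C00 ∪ S.C10 ∪ S.C20)
/-- `ℱ_3 = ⟨C_00, C_10, C_20, C_30⟩`. -/
def F3 : Set 𝒜 := ExtClosure (S.C00 ∪ S.C10 ∪ S.C20 ∪ S.C30)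
/-- `ℱ_4 = ⟨C_00, …, C_40⟩`. -/
def F4 : Set 𝒜 := ExtClosure (S.C00 ∪ S.C10 ∪ S.C20 ∪ S.C30 ∪ S.C40)
/-- `ℱ_5 = ⟨C_00, …, C_50⟩`. -/
def F5 : Set 𝒜 := ExtClosure (S.C00 ∪ S.C10 ∪ S.C20 ∪ S.C30 ∪ S.C40 ∪ S.C50)

end EllipticData

/-- The axioms (`Properties') of a Weierstraß elliptic threefold `π : X → B`,
following Angeles–Lo–van der Linden, Section 3. -/
structure EllipticAxioms {D : Type u'} [Category.{v'} D] [HasShift D ℤ]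
    (S : EllipticData 𝒜 D) : Prop where
  /-- `Coh(X)` is noetherian. -/
  noetherian : ∀ E : 𝒜, WellFoundedGT (Subobject E)
  /-- `X` is a threefold. -/
  dim_le_three : ∀ E : 𝒜, S.dim E ≤ 3
  /-- `B` is a surface. -/
  fdim_le_two : ∀ E : 𝒜, S.fdim E ≤ 2
  /-- Property D2 (first part): `dim π(supp E) ≤ dim E`. -/
  fdim_le_dim : ∀ E : 𝒜, S.fdim E ≤ S.dim E
  /-- Property D2 (second part; `π` is flat of relative dimension 1). -/
  dim_le_fdim_add_one : ∀ E : 𝒜, S.dim E ≤ S.fdim E + 1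
  /-- Property D1: `dim B = max (dim A) (dim C)` in a short exact sequence. -/
  dim_ses : ∀ {A B C : 𝒜} (f : A ⟶ B) (g : B ⟶ C),
    IsShortExact f g → S.dim B = max (S.dim A) (S.dim C)
  /-- Property D3: the analogue of D1 for `dim π(supp -)`. -/
  fdim_ses : ∀ {A B C : 𝒜} (f : A ⟶ B) (g : B ⟶ C),
    IsShortExact f g → S.fdim B = max (S.fdim A) (S.fdim C)
  /-- Property A2: `Φ̂ ∘ Φ ≅ id[-1]`. -/
  comp₁ : Nonempty (S.Φ ⋙ S.Φhat ≅ shiftFunctor D (-1 : ℤ))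
  /-- Property A2: `Φ ∘ Φ̂ ≅ id[-1]`. -/
  comp₂ : Nonempty (S.Φhat ⋙ S.Φ ≅ shiftFunctor D (-1 : ℤ))
  /-- `hat E` is a transform of the `Φ`-WIT_i sheaf `E`. -/
  hat_spec : ∀ (i : ℤ), ∀ E ∈ S.WIT i,
    Nonempty (S.Φ.obj (S.ι.obj E) ≅ (S.ι.obj (S.hat E))⟦(-i)⟧)
  /-- Property A3: `dim π(supp E) = dim π(supp ΦE)`. -/
  a3 : ∀ (E F : 𝒜) (i : ℤ),
    Nonempty (S.Φ.obj (S.ι.obj E) ≅ (S.ι.obj F)⟦(-i)⟧) → S.fdim F = S.fdim E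
  /-- Property TC1: each `𝒜_X^{≤ d}` is a Serre subcategory. -/
  tc1 : ∀ d : ℕ, IsSerre (S.Adim d)
  /-- Property TC2: each `𝒜(π)_{≤ e}` is a Serre subcategory. -/
  tc2 : ∀ e : ℕ, IsSerre (S.Afib e)
  /-- Property TC3: `(W_{0,Φ}, W_{1,Φ})` is a torsion pair in `Coh(X)`. -/
  tc3 : IsTorsionPair (S.WIT 0) (S.WIT 1)
  /-- Property C0: `C_00 ⊆ W_{0,Φ}`. -/
  c0 : S.C00 ⊆ S.WIT 0
  /-- Property C1: `C_20 ⊆ W_{0,Φ}`. -/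
  c1 : S.C20 ⊆ S.WIT 0
  /-- Sheaves in `C_20` are 1-dimensional with 1-dimensional image under `π`. -/
  c20_dim : ∀ E ∈ S.C20, S.dim E = 1 ∧ S.fdim E = 1
  /-- Properties Z1, Z2, D1: a 1-dimensional quotient of a horizontal sheaf is
  horizontal. -/
  c20_quot : ∀ E ∈ S.C20, ∀ E' : 𝒜, IsQuotient E E' → S.dim E' = 1 → E' ∈ S.C20
  /-- Properties Z1, Z2: every sheaf of dimension ≤ 1 is an extension of a
  fiber sheaf by a sheaf in `C_00 ∪ C_20`. -/
  hv_decomp : ∀ E ∈ S.Adim 1, ∃ (Eh Ev : 𝒜) (f : Eh ⟶ E) (g : E ⟶ Ev),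
    IsShortExact f g ∧ Eh ∈ S.C00 ∪ S.C20 ∧ Ev ∈ S.Afib 0

/-- The extra axioms available when `X = C × B` is the product of a smooth
elliptic curve `C` and a K3 surface `B` of Picard rank one, with `π` the
second projection (Properties CH1p, CH2p, CH3p, A4p). -/
structure ProductAxioms {D : Type u'} [Category.{v'} D] [HasShift D ℤ]
    (S : EllipticData 𝒜 D) : Prop where
  /-- Property CH1p: `codim E = min {i + j : α_ij ≠ 0}` for a nonzero sheaf. -/
  ch1p : ∀ E : 𝒜, ¬ IsZero E →
    3 - S.dim E =
      sInf {n : ℕ | ∃ (i : Fin 2) (j : Fin 3),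
        (i : ℕ) + (j : ℕ) = n ∧ S.ch (S.ι.obj E) i j ≠ 0}
  /-- Property CH2p: `dim π(supp E) = max {2 - j : α_1j ≠ 0}`. -/
  ch2p : ∀ E : 𝒜, ¬ IsZero E →
    S.fdim E = sSup {n : ℕ | ∃ j : Fin 3, 2 - (j : ℕ) = n ∧ S.ch (S.ι.obj E) 1 j ≠ 0}
  /-- Property CH3p: `∑_{i+j = codim E} α_ij > 0` for a nonzero sheaf. -/
  ch3p : ∀ E : 𝒜, ¬ IsZero E →
    0 < ∑ i : Fin 2, ∑ j : Fin 3,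
      (if (i : ℕ) + (j : ℕ) = 3 - S.dim E then S.ch (S.ι.obj E) i j else 0)
  /-- Property A4p: `ch(ΦE)` is obtained from `ch(E)` by a signed row swap. -/
  a4p_phi : ∀ Z : D,
    (∀ j : Fin 3, S.ch (S.Φ.obj Z) 0 j = S.ch Z 1 j) ∧
    (∀ j : Fin 3, S.ch (S.Φ.obj Z) 1 j = - S.ch Z 0 j)
  /-- Property A4p: `ch(E[1]) = - ch(E)`. -/
  a4p_shift : ∀ Z : D, ∀ (i : Fin 2) (j : Fin 3),
    S.ch (Z⟦(1 : ℤ)⟧) i j = - S.ch Z i j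

end EllipticFramework

namespace EllipticFramework

section Aux

variable {𝒜 : Type u} [Category.{v} 𝒜] [Abelian 𝒜]

/-- A mono together with its cokernel projection is short exact. -/
lemma isShortExact_of_mono' {A B : 𝒜} (f : A ⟶ B) [Mono f] :
    IsShortExact f (cokernel.π f) :=
  ⟨cokernel.condition f,
    { exact := ShortComplex.exact_of_g_is_cokernel _ (cokernelIsCokernel f) }⟩

/-- An epi together with its kernel inclusion is short exact. -/
lemma isShortExact_of_epi' {A B : 𝒜} (g : A ⟶ B) [Epi g] :
    IsShortExact (kernel.ι g) g :=
  ⟨kernel.condition g,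
    { exact := ShortComplex.exact_of_f_is_kernel _ (kernelIsKernel g) }⟩

variable {D : Type u'} [Category.{v'} D] [HasShift D ℤ]

/-- The extension closure `⟨C_00, C_20⟩` is closed under quotients. -/
lemma extClosure_C00_C20_quot (S : EllipticData 𝒜 D) (hS : EllipticAxioms S)
    {E : 𝒜} (hE : ExtClosure (S.C00 ∪ S.C20) E) :
    ∀ {E' : 𝒜} (p : E ⟶ E'), Epi p → ExtClosure (S.C00 ∪ S.C20) E' := by
  induction hE with
  | @of E hE =>
    intro E' p hp
    haveI := hp
    have hses := isShortExact_of_epi' p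
    have hd := hS.dim_ses _ _ hses
    have hle : S.dim E' ≤ S.dim E := by rw [hd]; exact le_max_right _ _
    rcases hE with h0 | h2
    · refine ExtClosure.of (Or.inl ?_)
      have h0' : S.dim E ≤ 0 := h0
      exact le_trans hle h0'
    · have h1 := (hS.c20_dim _ h2).1
      rcases Nat.eq_or_lt_of_le (h1 ▸ hle) with h | h
      · exact ExtClosure.of (Or.inr (hS.c20_quot _ h2 _ ⟨p, hp⟩ h))
      · exact ExtClosure.of (Or.inl (show S.dim E' ≤ 0 by omega))
  | zero hz =>
    intro E' p hp
    have hp0 : p = 0 := hz.eq_of_src p 0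
    have hid : 𝟙 E' = 0 := by
      haveI := hp
      rw [← cancel_epi p, hp0]; simp
    exact ExtClosure.zero ((IsZero.iff_id_eq_zero E').2 hid)
  | @ext A B C f g hfg hA hC ihA ihC =>
    intro B' p hp
    haveI := hp
    have sesI := isShortExact_of_mono' (image.ι (f ≫ p))
    refine ExtClosure.ext _ _ sesI ?_ ?_
    · exact ihA (factorThruImage (f ≫ p)) inferInstance
    · obtain ⟨w, hse⟩ := hfg
      have hcond : f ≫ (p ≫ cokernel.π (image.ι (f ≫ p))) = 0 := by
        have hfac : (f ≫ p) ≫ cokernel.π (image.ι (f ≫ p)) =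
            factorThruImage (f ≫ p) ≫
              (image.ι (f ≫ p) ≫ cokernel.π (image.ι (f ≫ p))) := by
          rw [← Category.assoc, image.fac]
        rw [← Category.assoc, hfac, cokernel.condition, comp_zero]
      obtain ⟨q, hq⟩ := CokernelCofork.IsColimit.desc' hse.gIsCokernel
        (p ≫ cokernel.π (image.ι (f ≫ p))) hcond
      have hq' : g ≫ q = p ≫ cokernel.π (image.ι (f ≫ p)) := hq
      have hepi : Epi q := by
        have : Epi (g ≫ q) := by rw [hq']; infer_instance
        exact epi_of_epi g q
      exact ihC q hepi

end Aux

/-- Lemma 4.8.  The extension closure `⟨C_00, C_20⟩` of the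
0-dimensional sheaves together with the 1-dimensional sheaves with horizontal
support is a torsion class in `Coh(X)`. -/
theorem C00_C20_torsion_class {𝒜 : Type u} {D : Type u'} [Category.{v} 𝒜]
    [Abelian 𝒜] [Category.{v'} D] [HasShift D ℤ] (S : EllipticData 𝒜 D)
    (hS : EllipticAxioms S) :
    IsTorsionClass (ExtClosure (S.C00 ∪ S.C20)) := by
  classical
  refine ⟨{Q | ∀ ⦃T : 𝒜⦄, ExtClosure (S.C00 ∪ S.C20) T → ∀ f : T ⟶ Q, f = 0},
    ?_, ?_⟩
  · intro A hA B hB f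
    exact hB hA f
  · intro E
    haveI : WellFoundedGT (Subobject E) := hS.noetherian E
    obtain ⟨A, hAs, hmax⟩ :=
      (IsWellFounded.wf (r := ((· > ·) : Subobject E → Subobject E → Prop))).has_min
        {P : Subobject E | ExtClosure (S.C00 ∪ S.C20) (P : 𝒜)}
        ⟨⊥, ExtClosure.zero ((isZero_zero 𝒜).of_iso Subobject.botCoeIsoZero)⟩
    refine ⟨(A : 𝒜), cokernel A.arrow, A.arrow, cokernel.π A.arrow, hAs, ?_,
      isShortExact_of_mono' _⟩
    intro T hT f
    by_contra hf
    -- `image f` is a nonzero member of the extension closure sitting inside the cokernel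
    have hInz : ¬ IsZero (image f) := by
      intro hz
      exact hf (by rw [← image.fac f, hz.eq_of_src (image.ι f) 0, comp_zero])
    have hI : ExtClosure (S.C00 ∪ S.C20) (image f) :=
      extClosure_C00_C20_quot S hS hT (factorThruImage f) inferInstance
    set q := cokernel.π A.arrow with hqdef
    set m := image.ι f with hmdef
    -- the pullback of `image f` along `q` is a strictly larger subobject of `E` in the class
    have hk0 : A.arrow ≫ q = 0 := cokernel.condition _
    have hkw : A.arrow ≫ q = (0 : (A : 𝒜) ⟶ image f) ≫ m := by simp [hk0]
    set k : (A : 𝒜) ⟶ pullback q m := pullback.lift A.arrow 0 hkw with hkdef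
    have hkfst : k ≫ pullback.fst q m = A.arrow := pullback.lift_fst _ _ _
    have hksnd : k ≫ pullback.snd q m = 0 := pullback.lift_snd _ _ _
    -- kernel of `pullback.snd` is isomorphic to `A`
    set u : (A : 𝒜) ⟶ kernel (pullback.snd q m) := kernel.lift _ k hksnd with hudef
    have huι : u ≫ kernel.ι (pullback.snd q m) = k := kernel.lift_ι _ _ _
    obtain ⟨wA, hseA⟩ := isShortExact_of_mono' A.arrow
    have hw : (kernel.ι (pullback.snd q m) ≫ pullback.fst q m) ≫ q = 0 := by
      rw [Category.assoc, pullback.condition, ← Category.assoc, kernel.condition,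
        zero_comp]
    obtain ⟨v, hv⟩ := KernelFork.IsLimit.lift' hseA.fIsKernel _ hw
    have hv' : v ≫ A.arrow = kernel.ι (pullback.snd q m) ≫ pullback.fst q m := hv
    have hvk : v ≫ k = kernel.ι (pullback.snd q m) := by
      apply pullback.hom_ext
      · rw [Category.assoc, hkfst, hv']
      · rw [Category.assoc, hksnd, comp_zero, kernel.condition]
    have huv : u ≫ v = 𝟙 _ := by
      rw [← cancel_mono A.arrow, Category.assoc, hv', ← Category.assoc, huι, hkfst,
        Category.id_comp]
    have hvu : v ≫ u = 𝟙 _ := by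
      rw [← cancel_mono (kernel.ι (pullback.snd q m)), Category.assoc, huι, hvk,
        Category.id_comp]
    haveI : IsIso u := ⟨v, huv, hvu⟩
    have hKmem : ExtClosure (S.C00 ∪ S.C20) (kernel (pullback.snd q m)) :=
      extClosure_C00_C20_quot S hS hAs u inferInstance
    have hPmem : ExtClosure (S.C00 ∪ S.C20) (pullback q m) :=
      ExtClosure.ext _ _ (isShortExact_of_epi' (pullback.snd q m)) hKmem hI
    -- the subobject given by `pullback.fst`
    have hNmem : ExtClosure (S.C00 ∪ S.C20)
        ((Subobject.mk (pullback.fst q m) : Subobject E) : 𝒜) :=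
      extClosure_C00_C20_quot S hS hPmem
        (Subobject.underlyingIso (pullback.fst q m)).inv inferInstance
    have hle : A ≤ Subobject.mk (pullback.fst q m) := Subobject.le_mk_of_comm k hkfst
    have hnle : ¬ Subobject.mk (pullback.fst q m) ≤ A := by
      intro hN
      have harr : Subobject.ofLE _ A hN ≫ A.arrow =
          (Subobject.mk (pullback.fst q m)).arrow := Subobject.ofLE_arrow hN
      have hfst : (Subobject.underlyingIso (pullback.fst q m)).inv ≫
          (Subobject.mk (pullback.fst q m)).arrow = pullback.fst q m :=
        Subobject.underlyingIso_arrow _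
      have h0 : pullback.snd q m ≫ m = 0 := by
        rw [← pullback.condition, ← hfst, ← harr]
        simp only [Category.assoc, hk0, comp_zero]
      have hsnd : pullback.snd q m = 0 := zero_of_comp_mono m h0
      have hid : 𝟙 (image f) = 0 := by
        rw [← cancel_epi (pullback.snd q m), hsnd]; simp
      exact hInz ((IsZero.iff_id_eq_zero _).2 hid)
    exact hmax _ hNmem (lt_of_le_not_ge hle hnle)

end EllipticFramework
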